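/- Let p be a prime, L a field of characteristic p, and k ⊆ L a subfield such that L contains two elements which are algebraically independent over k. Let φ : L → L be a field automorphism such that for every nonzero x ∈ L there exist a_x ∈ k and a nonnegative integer e_x with φ(x) = a_x · x^{p^{e_x}}. Then there exists a nonnegative integer e such that φ(x) = x^{p^e} for all x ∈ L, i.e., φ is the e-th power of the Frobenius endomorphism. -/
import Mathlib

open MvPolynomial

section AuxLemmas
variable {L : Type*} [Field L] {k : Subfield L}

private lemma auxZ {x : L} (hx : Transcendental k x) {w : L} (hw : IsAlgebraic k w)
    {m : ℤ} (h : x ^ m = w) : m = 0 := by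
  by_contra hm
  rcases lt_or_gt_of_ne hm with h' | h'
  · refine hx (IsAlgebraic.of_pow (n := (-m).toNat) (by omega) ?_)
    have hmm : x ^ ((-m).toNat : ℤ) = w⁻¹ := by
      rw [Int.toNat_of_nonneg (by omega), ← h, ← zpow_neg]
    rw [← zpow_natCast, hmm]
    exact hw.inv
  · refine hx (IsAlgebraic.of_pow (n := m.toNat) (by omega) ?_)
    have hmm : x ^ (m.toNat : ℤ) = w := by rw [Int.toNat_of_nonneg (by omega), h]
    rw [← zpow_natCast, hmm]
    exact hw

private lemma auxMONO {x y : L} (hxy : AlgebraicIndependent k ![x, y])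
    (A B A' B' : ℕ) (d : k) (h : x ^ A * y ^ B = (d : L) * (x ^ A' * y ^ B'))
    (hne : ¬(A = A' ∧ B = B')) : False := by
  classical
  set P : MvPolynomial (Fin 2) k :=
    X 0 ^ A * X 1 ^ B - MvPolynomial.C d * (X 0 ^ A' * X 1 ^ B') with hP
  have haev : aeval ![x, y] P = 0 := by
    simp only [hP, map_sub, map_mul, map_pow, aeval_X, aeval_C,
      Matrix.cons_val_zero, Matrix.cons_val_one, Matrix.head_cons]
    rw [sub_eq_zero]
    exact h
  have hP0 : P = 0 := hxy.eq_zero_of_aeval_eq_zero _ haev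
  have h1 : (X 0 ^ A * X 1 ^ B : MvPolynomial (Fin 2) k)
      = monomial (Finsupp.single 0 A + Finsupp.single 1 B) 1 := by
    rw [X_pow_eq_monomial, X_pow_eq_monomial, monomial_mul, mul_one]
  have h2 : (MvPolynomial.C d * (X 0 ^ A' * X 1 ^ B') : MvPolynomial (Fin 2) k)
      = monomial (Finsupp.single 0 A' + Finsupp.single 1 B') d := by
    rw [X_pow_eq_monomial, X_pow_eq_monomial, monomial_mul, mul_one, C_mul_monomial, mul_one]
  have hss : (Finsupp.single 0 A + Finsupp.single 1 B : Fin 2 →₀ ℕ)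
      ≠ Finsupp.single 0 A' + Finsupp.single 1 B' := by
    intro hs
    apply hne
    constructor
    · have := DFunLike.congr_fun hs 0
      simpa using this
    · have := DFunLike.congr_fun hs 1
      simpa using this
  have hco := congrArg (coeff (Finsupp.single 0 A + Finsupp.single 1 B)) hP0
  rw [hP, coeff_sub, h1, h2, coeff_monomial, coeff_monomial, if_pos rfl,
    if_neg (Ne.symm hss)] at hco
  simp at hco

private lemma auxM {x y : L} (hxy : AlgebraicIndependent k ![x, y])
    (a b : ℤ) (d : k) (h : x ^ a = (d : L) * y ^ b) : a = 0 := by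
  have htx : Transcendental k x := by simpa using hxy.transcendental 0
  have hty : Transcendental k y := by simpa using hxy.transcendental 1
  have hx0 : x ≠ 0 := fun h0 => htx (h0 ▸ isAlgebraic_zero)
  have hy0 : y ≠ 0 := fun h0 => hty (h0 ▸ isAlgebraic_zero)
  by_contra ha
  have e1 : (a.toNat : ℤ) = a + (-a).toNat := by omega
  have e2 : (b.toNat : ℤ) = b + (-b).toNat := by omega
  have key : x ^ (a.toNat : ℤ) * y ^ ((-b).toNat : ℤ)
      = (d : L) * (x ^ ((-a).toNat : ℤ) * y ^ (b.toNat : ℤ)) := by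
    rw [e1, e2, zpow_add₀ hx0, zpow_add₀ hy0, h]
    ring
  rw [zpow_natCast, zpow_natCast, zpow_natCast, zpow_natCast] at key
  exact auxMONO hxy _ _ _ _ d key (by omega)

private lemma auxADD {x y : L} (hxy : AlgebraicIndependent k ![x, y])
    (c : k) (M N R : ℕ) (hM : 0 < M) (hN : 0 < N) (hR : 0 < R)
    (h : x ^ M + y ^ N = (c : L) * x ^ R + (c : L) * y ^ R) : M = R ∧ N = R := by
  classical
  set P : MvPolynomial (Fin 2) k :=
    X 0 ^ M + X 1 ^ N - MvPolynomial.C c * X 0 ^ R - MvPolynomial.C c * X 1 ^ R with hP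
  have haev : aeval ![x, y] P = 0 := by
    simp only [hP, map_sub, map_add, map_mul, map_pow, aeval_X, aeval_C,
      Matrix.cons_val_zero, Matrix.cons_val_one, Matrix.head_cons]
    rw [sub_sub, sub_eq_zero]
    exact h
  have hP0 : P = 0 := hxy.eq_zero_of_aeval_eq_zero _ haev
  have hd1 : (Finsupp.single (1 : Fin 2) N) ≠ Finsupp.single (0 : Fin 2) M := by
    intro hs
    have := DFunLike.congr_fun hs 1
    simp at this
    omega
  have hd2 : ∀ R' : ℕ, 0 < R' →
      (Finsupp.single (1 : Fin 2) R') ≠ Finsupp.single (0 : Fin 2) M := by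
    intro R' hR' hs
    have := DFunLike.congr_fun hs 1
    simp at this
    omega
  have hd3 : ∀ R' : ℕ, 0 < R' →
      (Finsupp.single (0 : Fin 2) R') ≠ Finsupp.single (1 : Fin 2) N := by
    intro R' hR' hs
    have := DFunLike.congr_fun hs 0
    simp at this
    omega
  constructor
  · have hco := congrArg (coeff (Finsupp.single (0 : Fin 2) M)) hP0
    rw [hP] at hco
    rw [coeff_sub, coeff_sub, coeff_add, coeff_X_pow, coeff_X_pow, coeff_C_mul, coeff_C_mul,
      coeff_X_pow, coeff_X_pow, if_pos rfl, if_neg hd1, if_neg (hd2 R hR), coeff_zero] at hco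
    by_cases hMR : Finsupp.single (0 : Fin 2) R = Finsupp.single (0 : Fin 2) M
    · exact (Finsupp.single_injective 0 hMR).symm
    · rw [if_neg hMR] at hco
      simp at hco
  · have hco := congrArg (coeff (Finsupp.single (1 : Fin 2) N)) hP0
    rw [hP] at hco
    rw [coeff_sub, coeff_sub, coeff_add, coeff_X_pow, coeff_X_pow, coeff_C_mul, coeff_C_mul,
      coeff_X_pow, coeff_X_pow, if_neg (hd3 M hM), if_pos rfl, if_neg (hd3 R hR),
      coeff_zero] at hco
    by_cases hNR : Finsupp.single (1 : Fin 2) R = Finsupp.single (1 : Fin 2) N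
    · exact (Finsupp.single_injective 1 hNR).symm
    · rw [if_neg hNR] at hco
      simp at hco

private lemma auxT1 {x : L} (hx : Transcendental k x) (a b : k) (M N : ℕ)
    (hM : 0 < M) (hN : 0 < N) (ha : a ≠ 0)
    (h : (a : L) * x ^ M + 1 = (b : L) * x ^ N + (b : L)) : a = 1 := by
  classical
  set P : Polynomial k := Polynomial.C a * Polynomial.X ^ M + 1
      - Polynomial.C b * Polynomial.X ^ N - Polynomial.C b with hP
  have haev : Polynomial.aeval x P = 0 := by
    simp only [hP, map_sub, map_add, map_mul, map_pow, Polynomial.aeval_X, Polynomial.aeval_C,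
      map_one]
    rw [sub_sub, sub_eq_zero]
    exact h
  have hP0 : P = 0 := (transcendental_iff.mp hx) P haev
  have hb1 : b = 1 := by
    have hco := congrArg (fun q : Polynomial k => q.coeff 0) hP0
    simp only [hP, Polynomial.coeff_sub, Polynomial.coeff_add, Polynomial.coeff_C_mul,
      Polynomial.coeff_X_pow, Polynomial.coeff_one, Polynomial.coeff_C,
      Polynomial.coeff_zero, eq_self_iff_true, if_true] at hco
    split_ifs at hco
    all_goals first | omega | linear_combination -hco
  have hco := congrArg (fun q : Polynomial k => q.coeff M) hP0
  simp only [hP, Polynomial.coeff_sub, Polynomial.coeff_add, Polynomial.coeff_C_mul,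
    Polynomial.coeff_X_pow, Polynomial.coeff_one, Polynomial.coeff_C,
    Polynomial.coeff_zero, eq_self_iff_true, if_true] at hco
  split_ifs at hco
  all_goals first
    | omega
    | exact absurd (by linear_combination hco) ha
    | linear_combination hco + hb1

section Aux
variable {L : Type*} [Field L] {k : Subfield L}

private lemma algMul {u v : L} (hu : IsAlgebraic k u) (hv : IsAlgebraic k v) :
    IsAlgebraic k (u * v) :=
  (hu.isIntegral.mul hv.isIntegral).isAlgebraic

private lemma algPow {u : L} (hu : IsAlgebraic k u) (n : ℕ) : IsAlgebraic k (u ^ n) :=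
  (hu.isIntegral.pow n).isAlgebraic

private lemma algCoe (c : k) : IsAlgebraic k (c : L) := isAlgebraic_algebraMap c

end Aux


end AuxLemmas

/-- Let `L` be a field of characteristic `p`, `k ⊆ L` a subfield such that
`L` contains two elements algebraically independent over `k`, and `φ : L → L` a field
automorphism such that each nonzero `x ∈ L` satisfies `φ x = a_x * x ^ p ^ e_x` for some
`a_x ∈ k` and `e_x ≥ 0`. Then `φ` is a power of the Frobenius: `φ x = x ^ p ^ e` for all `x`. -/
theorem statement12 (p : ℕ) [Fact p.Prime] (L : Type*) [Field L] [CharP L p]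
    (k : Subfield L)
    (hindep : ∃ x y : L, AlgebraicIndependent k ![x, y])
    (φ : L ≃+* L)
    (hφ : ∀ x : L, x ≠ 0 → ∃ (a : k) (e : ℕ), φ x = (a : L) * x ^ p ^ e) :
    ∃ e : ℕ, ∀ x : L, φ x = x ^ p ^ e := by
  classical
  have hp : p.Prime := Fact.out
  have hppos : 0 < p := hp.pos
  obtain ⟨x, y, hxy⟩ := hindep
  have htx : Transcendental k x := by simpa using hxy.transcendental 0
  have hty : Transcendental k y := by simpa using hxy.transcendental 1
  have hx0 : x ≠ 0 := fun h => htx (h ▸ isAlgebraic_zero)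
  have hy0 : y ≠ 0 := fun h => hty (h ▸ isAlgebraic_zero)
  have hφ0 : ∀ z : L, z ≠ 0 → φ z ≠ 0 := by
    intro z hz h
    exact hz (φ.injective (h.trans (map_zero φ).symm))
  -- coefficient of hφ is nonzero
  have hcoeff : ∀ (z : L) (hz : z ≠ 0) (a : k) (e : ℕ), φ z = (a : L) * z ^ p ^ e → a ≠ 0 := by
    intro z hz a e he ha
    apply hφ0 z hz
    rw [he, ha]
    simp
  -- normalized form for transcendental elements
  have key : ∀ t : L, Transcendental k t → ∃ e : ℕ, φ t = t ^ p ^ e := by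
    intro t ht
    have ht0 : t ≠ 0 := fun h => ht (h ▸ isAlgebraic_zero)
    have ht1 : t + 1 ≠ 0 := by
      intro h
      apply ht
      have h' : t = ((-1 : ℤ) : L) := by push_cast; linear_combination h
      rw [h']
      exact isAlgebraic_int (-1)
    obtain ⟨a, e, hae⟩ := hφ t ht0
    obtain ⟨b, f, hbf⟩ := hφ (t + 1) ht1
    have ha : a ≠ 0 := hcoeff t ht0 a e hae
    have heq : (a : L) * t ^ p ^ e + 1 = (b : L) * t ^ p ^ f + (b : L) := by
      have h1 : φ (t + 1) = φ t + 1 := by rw [map_add, map_one]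
      rw [hbf, hae, add_pow_char_pow] at h1
      rw [← h1, one_pow, mul_add, mul_one]
    have := auxT1 ht a b _ _ (pow_pos hppos e) (pow_pos hppos f) ha heq
    refine ⟨e, ?_⟩
    rw [hae, this]
    simp
  obtain ⟨e, hxe⟩ := key x htx
  obtain ⟨ey, hye⟩ := key y hty
  have hxy0 : x + y ≠ 0 := by
    intro h
    have h0 : (X 0 + X 1 : MvPolynomial (Fin 2) k) = 0 :=
      hxy.eq_zero_of_aeval_eq_zero _ (by simp [h])
    have := congrArg (coeff (Finsupp.single (0 : Fin 2) 1)) h0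
    rw [coeff_add] at this
    rw [show (X 0 : MvPolynomial (Fin 2) k) = X 0 ^ 1 by ring,
        show (X 1 : MvPolynomial (Fin 2) k) = X 1 ^ 1 by ring,
        coeff_X_pow, coeff_X_pow, if_pos rfl, coeff_zero] at this
    rw [if_neg (by
      intro hs
      have := DFunLike.congr_fun hs 1
      simp at this)] at this
    simp at this
  -- exponents of x and y agree
  have hq : p ^ e = p ^ ey := by
    obtain ⟨c, r, hcr⟩ := hφ (x + y) hxy0
    have heq : x ^ p ^ e + y ^ p ^ ey = (c : L) * x ^ p ^ r + (c : L) * y ^ p ^ r := by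
      have h1 : φ (x + y) = φ x + φ y := map_add φ x y
      rw [hxe, hye, hcr, add_pow_char_pow, mul_add] at h1
      exact h1.symm
    obtain ⟨h1, h2⟩ := auxADD hxy c _ _ _ (pow_pos hppos e) (pow_pos hppos ey)
      (pow_pos hppos r) heq
    rw [h1, h2]
  have hye' : φ y = y ^ p ^ e := by rw [hye, hq]
  refine ⟨e, fun z => ?_⟩
  by_cases hz0 : z = 0
  · rw [hz0, map_zero, zero_pow (pow_ne_zero e hp.ne_zero)]
  by_cases halg : IsAlgebraic k z
  · -- z algebraic over k
    have hxz : Transcendental k (x * z) := by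
      intro h
      apply htx
      have hx' : x = (x * z) * z⁻¹ := by field_simp
      rw [hx']
      exact algMul h halg.inv
    obtain ⟨r, hr⟩ := key (x * z) hxz
    obtain ⟨b, f, hbz⟩ := hφ z hz0
    have heq : x ^ p ^ r * z ^ p ^ r = x ^ p ^ e * ((b : L) * z ^ p ^ f) := by
      have h1 : φ (x * z) = φ x * φ z := map_mul φ x z
      rw [hr, hxe, hbz, mul_pow] at h1
      exact h1
    have hdiv : x ^ p ^ r / x ^ p ^ e = ((b : L) * z ^ p ^ f) / z ^ p ^ r := by
      rw [div_eq_div_iff (pow_ne_zero _ hx0) (pow_ne_zero _ hz0)]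
      linear_combination heq
    have hzpow : x ^ ((p ^ r : ℕ) - (p ^ e : ℕ) : ℤ)
        = ((b : L) * z ^ p ^ f) * (z ^ p ^ r)⁻¹ := by
      rw [zpow_sub₀ hx0, zpow_natCast, zpow_natCast, hdiv, div_eq_mul_inv]
    have hw : IsAlgebraic k (((b : L) * z ^ p ^ f) * (z ^ p ^ r)⁻¹) :=
      algMul (algMul (algCoe b) (algPow halg _)) (algPow halg _).inv
    have h0 := auxZ htx hw hzpow
    have her : p ^ r = p ^ e := by omega
    rw [her] at heq
    have hz' : z ^ p ^ e = (b : L) * z ^ p ^ f :=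
      mul_left_cancel₀ (pow_ne_zero _ hx0) heq
    rw [hbz, ← hz']
  · -- z transcendental over k
    have htz : Transcendental k z := halg
    obtain ⟨f, hzf⟩ := key z htz
    rw [hzf]
    suffices hfe : p ^ f = p ^ e by rw [hfe]
    obtain ⟨c, r, hcr⟩ := hφ (x * z) (mul_ne_zero hx0 hz0)
    obtain ⟨c', r', hcr'⟩ := hφ (y * z) (mul_ne_zero hy0 hz0)
    have hc : c ≠ 0 := hcoeff _ (mul_ne_zero hx0 hz0) c r hcr
    have hc' : c' ≠ 0 := hcoeff _ (mul_ne_zero hy0 hz0) c' r' hcr'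
    have heq1 : (c : L) * (x ^ p ^ r * z ^ p ^ r) = x ^ p ^ e * z ^ p ^ f := by
      have h1 : φ (x * z) = φ x * φ z := map_mul φ x z
      rw [hcr, hxe, hzf, mul_pow] at h1
      linear_combination h1
    have heq2 : (c' : L) * (y ^ p ^ r' * z ^ p ^ r') = y ^ p ^ e * z ^ p ^ f := by
      have h1 : φ (y * z) = φ y * φ z := map_mul φ y z
      rw [hcr', hye', hzf, mul_pow] at h1
      linear_combination h1
    have hcL : (c : L) ≠ 0 := fun hh => hc (Subtype.coe_injective (by simpa using hh))
    have hc'L : (c' : L) ≠ 0 := fun hh => hc' (Subtype.coe_injective (by simpa using hh))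
    by_cases hAF : p ^ r = p ^ f
    · -- cancel z powers
      rw [hAF] at heq1
      have hcx : (c : L) * x ^ p ^ f = x ^ p ^ e :=
        mul_right_cancel₀ (pow_ne_zero (p ^ f) hz0) (by linear_combination heq1)
      have hzx : x ^ ((p ^ e : ℕ) - (p ^ f : ℕ) : ℤ) = (c : L) := by
        rw [zpow_sub₀ hx0, zpow_natCast, zpow_natCast,
          div_eq_iff (pow_ne_zero _ hx0)]
        linear_combination -hcx
      have h0 := auxZ htx (algCoe c) hzx
      omega
    by_cases hAF' : p ^ r' = p ^ f
    · rw [hAF'] at heq2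
      have hcy : (c' : L) * y ^ p ^ f = y ^ p ^ e := by
        have h2 : ((c' : L) * y ^ p ^ f) * z ^ p ^ f = y ^ p ^ e * z ^ p ^ f := by
          linear_combination heq2
        exact mul_right_cancel₀ (pow_ne_zero (p ^ f) hz0) h2
      have hzy : y ^ ((p ^ e : ℕ) - (p ^ f : ℕ) : ℤ) = (c' : L) := by
        rw [zpow_sub₀ hy0, zpow_natCast, zpow_natCast,
          div_eq_iff (pow_ne_zero _ hy0)]
        linear_combination -hcy
      have h0 := auxZ hty (algCoe c') hzy
      omega
    -- both exponents differ from f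
    set m : ℤ := (p ^ r : ℕ) - (p ^ f : ℕ) with hm_def
    set n : ℤ := (p ^ e : ℕ) - (p ^ r : ℕ) with hn_def
    set m' : ℤ := (p ^ r' : ℕ) - (p ^ f : ℕ) with hm'_def
    set n' : ℤ := (p ^ e : ℕ) - (p ^ r' : ℕ) with hn'_def
    have hm : m ≠ 0 := by
      simp only [hm_def, sub_ne_zero]
      exact_mod_cast hAF
    have hm' : m' ≠ 0 := by
      simp only [hm'_def, sub_ne_zero]
      exact_mod_cast hAF'
    have rel1 : z ^ m = (c : L)⁻¹ * x ^ n := by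
      have hd : z ^ p ^ r / z ^ p ^ f = x ^ p ^ e / ((c : L) * x ^ p ^ r) := by
        rw [div_eq_div_iff (pow_ne_zero _ hz0) (mul_ne_zero hcL (pow_ne_zero _ hx0))]
        linear_combination heq1
      rw [hm_def, hn_def, zpow_sub₀ hz0, zpow_sub₀ hx0, zpow_natCast, zpow_natCast,
        zpow_natCast, zpow_natCast, hd]
      field_simp
    have rel2 : z ^ m' = (c' : L)⁻¹ * y ^ n' := by
      have hd : z ^ p ^ r' / z ^ p ^ f = y ^ p ^ e / ((c' : L) * y ^ p ^ r') := by
        rw [div_eq_div_iff (pow_ne_zero _ hz0) (mul_ne_zero hc'L (pow_ne_zero _ hy0))]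
        linear_combination heq2
      rw [hm'_def, hn'_def, zpow_sub₀ hz0, zpow_sub₀ hy0, zpow_natCast, zpow_natCast,
        zpow_natCast, zpow_natCast, hd]
      field_simp
    have hn : n ≠ 0 := by
      intro h0
      rw [h0, zpow_zero, mul_one] at rel1
      exact hm (auxZ htz (algCoe c).inv rel1)
    have comb : x ^ (n * m') = ((c ^ m' * (c' ^ m)⁻¹ : k) : L) * y ^ (n' * m) := by
      have e1 : z ^ (m * m') = ((c : L)⁻¹) ^ m' * x ^ (n * m') := by
        rw [zpow_mul, rel1, mul_zpow, ← zpow_mul]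
      have e2 : z ^ (m * m') = ((c' : L)⁻¹) ^ m * y ^ (n' * m) := by
        rw [mul_comm m m', zpow_mul, rel2, mul_zpow, ← zpow_mul]
      have hthis : ((c : L) ^ m')⁻¹ * x ^ (n * m') = ((c' : L) ^ m)⁻¹ * y ^ (n' * m) := by
        rw [← inv_zpow, ← inv_zpow]
        exact e1.symm.trans e2
      have hcoe : ((c ^ m' * (c' ^ m)⁻¹ : k) : L) = (c : L) ^ m' * ((c' : L) ^ m)⁻¹ := by
        calc ((c ^ m' * (c' ^ m)⁻¹ : k) : L) = k.subtype (c ^ m' * (c' ^ m)⁻¹) := rfl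
          _ = (c : L) ^ m' * ((c' : L) ^ m)⁻¹ := by
              rw [map_mul, map_inv₀, map_zpow₀, map_zpow₀]
              rfl
      have hA : (c : L) ^ m' ≠ 0 := zpow_ne_zero _ hcL
      calc x ^ (n * m')
          = (c : L) ^ m' * (((c : L) ^ m')⁻¹ * x ^ (n * m')) := by
            rw [← mul_assoc, mul_inv_cancel₀ hA, one_mul]
        _ = (c : L) ^ m' * (((c' : L) ^ m)⁻¹ * y ^ (n' * m)) := by rw [hthis]
        _ = ((c ^ m' * (c' ^ m)⁻¹ : k) : L) * y ^ (n' * m) := by rw [hcoe, mul_assoc]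
    have := auxM hxy (n * m') (n' * m) _ comb
    exact absurd this (mul_ne_zero hn hm')
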